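/- Under assumptions (A0) and (A1), over the region S_{β^{l0}} containing the LTS estimator, β̂^n_lts is the unique solution of the fixed-point equation β̂^n_lts = M_n(Y_n, X_n, β̂^n_lts, α)^{-1} Σ_{i=1}^h y_{k_i(β^{l0})} w_{k_i(β^{l0})}, where M_n(Y_n, X_n, β, α) = Σ_{i=1}^h w_{k_i(β)} w_{k_i(β)}' is invertible. -/
import Mathlib


open MeasureTheory Finset Metric
open scoped ENNReal

noncomputable section

/-- The i-th residual `r_i(β) = y_i - w_i'β`. -/
def res {n p : ℕ} (w : Fin n → Fin p → ℝ) (y : Fin n → ℝ) (β : Fin p → ℝ) (i : Fin n) : ℝ :=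
  y i - ∑ j, w i j * β j

/-- The empirical LTS objective `O^n(β) = (1/n) ∑_{i=1}^h r²_{i:n}(β)`: the sum of the `h`
smallest squared residuals, i.e. the minimum over all size-`h` index sets of the sum of the
corresponding squared residuals. -/
def Oemp {n p : ℕ} (w : Fin n → Fin p → ℝ) (y : Fin n → ℝ) (h : ℕ) (β : Fin p → ℝ) : ℝ :=
  (1 / (n : ℝ)) *
    sInf ((fun s : Finset (Fin n) => ∑ i ∈ s, (res w y β i) ^ 2) '' {s | s.card = h})

/-- `k` enumerates the indices of the `h` smallest squared residuals at `β`,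
in increasing order. -/
def IsHSeq {n p : ℕ} (w : Fin n → Fin p → ℝ) (y : Fin n → ℝ) {h : ℕ}
    (k : Fin h → Fin n) (β : Fin p → ℝ) : Prop :=
  Function.Injective k ∧
    (∀ i j : Fin h, i ≤ j → (res w y β (k i)) ^ 2 ≤ (res w y β (k j)) ^ 2) ∧
    (∀ m : Fin n, m ∉ Set.range k → ∀ i : Fin h, (res w y β (k i)) ^ 2 ≤ (res w y β m) ^ 2)

/-- The region `S_{β^l}`: the set of `β` whose (unique) `h`-index sequence is `k`. -/
def Sreg {n p : ℕ} (w : Fin n → Fin p → ℝ) (y : Fin n → ℝ) {h : ℕ}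
    (k : Fin h → Fin n) : Set (Fin p → ℝ) :=
  {β | IsHSeq w y k β ∧ ∀ k' : Fin h → Fin n, IsHSeq w y k' β → k' = k}

/-- Assumption (A1): the design matrix `X_n` and each of its `h`-row submatrices
have full rank `p`. -/
def A1 {n p : ℕ} (w : Fin n → Fin p → ℝ) (h : ℕ) : Prop :=
  (Matrix.of w).rank = p ∧
    ∀ s : Finset (Fin n), s.card = h →
      ((Matrix.of w).submatrix (fun i : {x // x ∈ s} => (i : Fin n)) id).rank = p

/-- Assumption (A0): for every `β`, `W(β) = (y - w'β)²` has a density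
(its law is absolutely continuous w.r.t. Lebesgue measure). -/
def A0 {Ω : Type*} [MeasurableSpace Ω] (P : Measure Ω) {n p : ℕ}
    (w : Ω → Fin n → Fin p → ℝ) (y : Ω → Fin n → ℝ) : Prop :=
  ∀ (β : Fin p → ℝ) (i : Fin n),
    (P.map fun ω => (res (w ω) (y ω) β i) ^ 2) ≪ (volume : Measure ℝ)

lemma mulVec_eq_zero_of_rank {ι : Type*} [Fintype ι] {p : ℕ} (A : Matrix ι (Fin p) ℝ)
    (hA : A.rank = p) {v : Fin p → ℝ} (hv : A.mulVec v = 0) : v = 0 := by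
  have h := LinearMap.finrank_range_add_finrank_ker A.mulVecLin
  rw [Module.finrank_pi] at h
  simp only [Fintype.card_fin] at h
  have hker : Module.finrank ℝ (LinearMap.ker A.mulVecLin) = 0 := by
    have : A.rank = Module.finrank ℝ (LinearMap.range A.mulVecLin) := rfl
    omega
  have hbot : LinearMap.ker A.mulVecLin = ⊥ := Submodule.finrank_eq_zero.mp hker
  have hvmem : v ∈ LinearMap.ker A.mulVecLin := by
    simp [LinearMap.mem_ker, Matrix.mulVecLin_apply, hv]
  rw [hbot] at hvmem
  simpa using hvmem

lemma det_isUnit_of_A1 {n p hn : ℕ} (w : Fin n → Fin p → ℝ) (k : Fin hn → Fin n)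
    (hk : Function.Injective k)
    (hA1 : ∀ s : Finset (Fin n), s.card = hn →
      ((Matrix.of w).submatrix (fun i : {x // x ∈ s} => (i : Fin n)) id).rank = p) :
    IsUnit (Matrix.of fun j j' : Fin p => ∑ i : Fin hn, w (k i) j * w (k i) j').det := by
  set M := Matrix.of fun j j' : Fin p => ∑ i : Fin hn, w (k i) j * w (k i) j' with hMdef
  set s : Finset (Fin n) := Finset.image k Finset.univ with hs
  have hcs : s.card = hn := by
    rw [hs, Finset.card_image_of_injective _ hk, Finset.card_univ, Fintype.card_fin]
  rw [isUnit_iff_ne_zero]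
  intro hdet0
  obtain ⟨v, hv0, hMv⟩ := (Matrix.exists_mulVec_eq_zero_iff).mpr hdet0
  have expand : ∑ j, v j * M.mulVec v j = ∑ i : Fin hn, (∑ j, w (k i) j * v j) ^ 2 := by
    simp only [Matrix.mulVec, dotProduct, hMdef, Matrix.of_apply]
    calc ∑ j, v j * ∑ j', (∑ i : Fin hn, w (k i) j * w (k i) j') * v j'
        = ∑ j, ∑ j', ∑ i : Fin hn, (w (k i) j * v j) * (w (k i) j' * v j') := by
          apply Finset.sum_congr rfl; intro j _
          rw [Finset.mul_sum]; apply Finset.sum_congr rfl; intro j' _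
          rw [Finset.sum_mul, Finset.mul_sum]
          apply Finset.sum_congr rfl; intro i _; ring
      _ = ∑ j, ∑ i : Fin hn, ∑ j', (w (k i) j * v j) * (w (k i) j' * v j') := by
          apply Finset.sum_congr rfl; intro j _
          rw [Finset.sum_comm]
      _ = ∑ i : Fin hn, ∑ j, ∑ j', (w (k i) j * v j) * (w (k i) j' * v j') :=
          Finset.sum_comm
      _ = ∑ i : Fin hn, (∑ j, w (k i) j * v j) ^ 2 := by
          apply Finset.sum_congr rfl; intro i _
          rw [sq, Finset.sum_mul_sum]
  have h0 : ∑ i : Fin hn, (∑ j, w (k i) j * v j) ^ 2 = 0 := by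
    rw [← expand, hMv]; simp
  have hrow : ∀ i : Fin hn, ∑ j, w (k i) j * v j = 0 := by
    intro i
    have := (Finset.sum_eq_zero_iff_of_nonneg (fun i _ => sq_nonneg _)).mp h0 i (Finset.mem_univ i)
    exact pow_eq_zero_iff (two_ne_zero) |>.mp this
  have hAv : ((Matrix.of w).submatrix (fun i : {x // x ∈ s} => (i : Fin n)) id).mulVec v = 0 := by
    funext x
    obtain ⟨i, _, hi⟩ := Finset.mem_image.mp x.2
    simp only [Matrix.mulVec, dotProduct, Matrix.submatrix_apply, Matrix.of_apply, id]
    rw [← hi]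
    simpa using hrow i
  exact hv0 (mulVec_eq_zero_of_rank _ (hA1 s hcs) hAv)

lemma sum_image_le_of_min {n hn : ℕ} (k : Fin hn → Fin n) (hk : Function.Injective k)
    (f : Fin n → ℝ)
    (hmin : ∀ m : Fin n, m ∉ Set.range k → ∀ i : Fin hn, f (k i) ≤ f m)
    (s : Finset (Fin n)) (hs : s.card = hn) :
    ∑ i ∈ Finset.image k Finset.univ, f i ≤ ∑ i ∈ s, f i := by
  set t := Finset.image k Finset.univ with ht
  have hct : t.card = hn := by rw [ht, Finset.card_image_of_injective _ hk, Finset.card_univ,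
    Fintype.card_fin]
  have hcard : (t \ s).card = (s \ t).card := by
    have h1 := Finset.card_sdiff_add_card_inter t s
    have h2 := Finset.card_sdiff_add_card_inter s t
    rw [Finset.inter_comm] at h2
    omega
  have key : ∑ i ∈ t \ s, f i ≤ ∑ i ∈ s \ t, f i := by
    obtain e := Finset.equivOfCardEq hcard
    calc ∑ i ∈ t \ s, f i = ∑ x ∈ (t \ s).attach, f x.1 := (Finset.sum_attach _ _).symm
      _ ≤ ∑ x ∈ (t \ s).attach, f (e x).1 := by
          apply Finset.sum_le_sum
          intro x _
          have hx : x.1 ∈ t := (Finset.mem_sdiff.mp x.2).1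
          obtain ⟨i, _, hi⟩ := Finset.mem_image.mp hx
          have hex : (e x).1 ∉ Set.range k := by
            have := (Finset.mem_sdiff.mp (e x).2).2
            intro ⟨j, hj⟩
            exact this (Finset.mem_image.mpr ⟨j, Finset.mem_univ _, hj⟩)
          rw [← hi]
          exact hmin _ hex i
      _ = ∑ y ∈ (s \ t).attach, f y.1 := Finset.sum_bijective e e.bijective (by simp) (by simp)
      _ = ∑ i ∈ s \ t, f i := Finset.sum_attach _ _
  have h1 : ∑ i ∈ t, f i = ∑ i ∈ t ∩ s, f i + ∑ i ∈ t \ s, f i :=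
    (Finset.sum_inter_add_sum_sdiff t s f).symm
  have h2 : ∑ i ∈ s, f i = ∑ i ∈ s ∩ t, f i + ∑ i ∈ s \ t, f i :=
    (Finset.sum_inter_add_sum_sdiff s t f).symm
  rw [h1, h2, Finset.inter_comm]
  linarith

lemma quad_key {h p : ℕ} (W : Fin h → Fin p → ℝ) (Y : Fin h → ℝ) (βs β : Fin p → ℝ)
    (hc : ∀ j, ∑ i, (Y i - ∑ j', W i j' * βs j') * W i j = 0) :
    ∑ i, (Y i - ∑ j, W i j * β j) ^ 2
      = ∑ i, (Y i - ∑ j, W i j * βs j) ^ 2 + ∑ i, (∑ j, W i j * (β j - βs j)) ^ 2 := by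
  have hsplit : ∀ i, (Y i - ∑ j, W i j * β j) ^ 2
      = (Y i - ∑ j, W i j * βs j) ^ 2
        - 2 * ((Y i - ∑ j', W i j' * βs j') * ∑ j, W i j * (β j - βs j))
        + (∑ j, W i j * (β j - βs j)) ^ 2 := by
    intro i
    have hb : ∑ j, W i j * β j = ∑ j, W i j * βs j + ∑ j, W i j * (β j - βs j) := by
      rw [← Finset.sum_add_distrib]; apply Finset.sum_congr rfl; intros; ring
    rw [hb]; ring
  rw [Finset.sum_congr rfl (fun i _ => hsplit i), Finset.sum_add_distrib,
    Finset.sum_sub_distrib]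
  have hz : ∑ i, 2 * ((Y i - ∑ j', W i j' * βs j') * ∑ j, W i j * (β j - βs j)) = 0 := by
    have hrw : ∀ i, 2 * ((Y i - ∑ j', W i j' * βs j') * ∑ j, W i j * (β j - βs j))
        = ∑ j, ((Y i - ∑ j', W i j' * βs j') * W i j) * (2 * (β j - βs j)) := by
      intro i; rw [Finset.mul_sum]
      rw [Finset.mul_sum]
      apply Finset.sum_congr rfl; intros; ring
    rw [Finset.sum_congr rfl (fun i _ => hrw i), Finset.sum_comm]
    apply Finset.sum_eq_zero; intro j _
    rw [← Finset.sum_mul, hc j, zero_mul]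
  rw [hz]
  ring

/-- Theorem 2.1 (iii): under (A0) and (A1), almost surely, over the region `S_{β^{l₀}}`
containing the LTS estimator, the matrix `M_n = ∑_{i=1}^h w_{k_i} w_{k_i}'` is invertible
and the LTS estimator is the unique solution of the fixed-point equation
`β = M_n⁻¹ ∑_{i=1}^h y_{k_i} w_{k_i}`. -/
theorem stmt_5 {Ω : Type*} [MeasurableSpace Ω] (P : Measure Ω) [IsProbabilityMeasure P]
    (n p hn : ℕ) (α c : ℝ) (hc : 1 / 2 < c ∧ c < 1) (hα : α ∈ Set.Icc (1 / 2) c)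
    (hhn : hn = ⌊α * n⌋₊ + 1) (hp : 2 ≤ p) (hpn : 2 * p < n) (hn2 : n ≤ 2 * hn)
    (hnn : hn < n)
    (w : Ω → Fin n → Fin p → ℝ) (y : Ω → Fin n → ℝ)
    (hmeas : ∀ i : Fin n, Measurable fun ω => (w ω i, y ω i))
    (hw1 : ∀ ω i, w ω i ⟨0, by omega⟩ = 1)
    (hA0 : A0 P w y) (hA1 : ∀ ω, A1 (w ω) hn) :
    ∀ᵐ ω ∂P, ∀ (βh : Fin p → ℝ) (k : Fin hn → Fin n),
      (∀ β : Fin p → ℝ, Oemp (w ω) (y ω) hn βh ≤ Oemp (w ω) (y ω) hn β) →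
      βh ∈ Sreg (w ω) (y ω) k →
      IsUnit (Matrix.of fun j j' : Fin p =>
          ∑ i : Fin hn, w ω (k i) j * w ω (k i) j').det ∧
      βh = (Matrix.of fun j j' : Fin p =>
          ∑ i : Fin hn, w ω (k i) j * w ω (k i) j')⁻¹.mulVec
            (fun j => ∑ i : Fin hn, y ω (k i) * w ω (k i) j) ∧
      (∀ β ∈ Sreg (w ω) (y ω) k,
        β = (Matrix.of fun j j' : Fin p =>
            ∑ i : Fin hn, w ω (k i) j * w ω (k i) j')⁻¹.mulVec
              (fun j => ∑ i : Fin hn, y ω (k i) * w ω (k i) j) → β = βh) := by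
  refine Filter.Eventually.of_forall (fun ω βh k hminO hS => ?_)
  obtain ⟨⟨hkinj, hord, hout⟩, -⟩ := hS
  set M := Matrix.of fun j j' : Fin p => ∑ i : Fin hn, w ω (k i) j * w ω (k i) j' with hMdef
  set b : Fin p → ℝ := fun j => ∑ i : Fin hn, y ω (k i) * w ω (k i) j with hbdef
  have hdet : IsUnit M.det := det_isUnit_of_A1 (w ω) k hkinj (hA1 ω).2
  set βs : Fin p → ℝ := M⁻¹.mulVec b with hβsdef
  have hMβs : M.mulVec βs = b := by
    rw [hβsdef, Matrix.mulVec_mulVec, Matrix.mul_nonsing_inv _ hdet, Matrix.one_mulVec]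
  have hc : ∀ j, ∑ i : Fin hn, (y ω (k i) - ∑ j', w ω (k i) j' * βs j') * w ω (k i) j = 0 := by
    intro j
    have h2 : M.mulVec βs j = ∑ i : Fin hn, (∑ j', w ω (k i) j' * βs j') * w ω (k i) j := by
      simp only [Matrix.mulVec, dotProduct, hMdef, Matrix.of_apply]
      calc ∑ j', (∑ i : Fin hn, w ω (k i) j * w ω (k i) j') * βs j'
          = ∑ j', ∑ i : Fin hn, (w ω (k i) j' * βs j') * w ω (k i) j := by
            apply Finset.sum_congr rfl; intro j' _; rw [Finset.sum_mul]
            apply Finset.sum_congr rfl; intros; ring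
        _ = ∑ i : Fin hn, ∑ j', (w ω (k i) j' * βs j') * w ω (k i) j := Finset.sum_comm
        _ = ∑ i : Fin hn, (∑ j', w ω (k i) j' * βs j') * w ω (k i) j := by
            apply Finset.sum_congr rfl; intro i _; rw [Finset.sum_mul]
    have h3 : ∑ i : Fin hn, (y ω (k i) - ∑ j', w ω (k i) j' * βs j') * w ω (k i) j
        = b j - M.mulVec βs j := by
      rw [h2, hbdef, ← Finset.sum_sub_distrib]
      apply Finset.sum_congr rfl; intros; ring
    rw [h3, hMβs, sub_self]
  -- minimization: Q βh ≤ Q βs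
  have hcardim : (Finset.image k Finset.univ).card = hn := by
    rw [Finset.card_image_of_injective _ hkinj, Finset.card_univ, Fintype.card_fin]
  have himg : ∀ β : Fin p → ℝ, ∑ i ∈ Finset.image k Finset.univ, (res (w ω) (y ω) β i) ^ 2
      = ∑ i : Fin hn, (res (w ω) (y ω) β (k i)) ^ 2 := fun β =>
    Finset.sum_image (fun x _ y _ hxy => hkinj hxy)
  obtain ⟨s₀, -, hs₀⟩ := Finset.exists_subset_card_eq
    (show hn ≤ (Finset.univ : Finset (Fin n)).card by
      rw [Finset.card_univ, Fintype.card_fin]; omega)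
  have hQle : ∑ i : Fin hn, (res (w ω) (y ω) βh (k i)) ^ 2 ≤
      sInf ((fun s : Finset (Fin n) => ∑ i ∈ s, (res (w ω) (y ω) βh i) ^ 2) ''
        {s | s.card = hn}) := by
    refine le_csInf ⟨_, ⟨s₀, hs₀, rfl⟩⟩ ?_
    rintro x ⟨s, hs, rfl⟩
    rw [← himg βh]
    exact sum_image_le_of_min k hkinj _ (fun m hm i => hout m hm i) s hs
  have hQge : sInf ((fun s : Finset (Fin n) => ∑ i ∈ s, (res (w ω) (y ω) βs i) ^ 2) ''
      {s | s.card = hn}) ≤ ∑ i : Fin hn, (res (w ω) (y ω) βs (k i)) ^ 2 := by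
    rw [← himg βs]
    exact csInf_le ((Set.toFinite _).image _).bddBelow
      ⟨Finset.image k Finset.univ, hcardim, rfl⟩
  have hmono := hminO βs
  simp only [Oemp] at hmono
  have hn0 : (0:ℝ) < 1 / (n : ℝ) := by
    have : 0 < n := by omega
    positivity
  have hsInfle := le_of_mul_le_mul_left hmono hn0
  have hQQ : ∑ i : Fin hn, (res (w ω) (y ω) βh (k i)) ^ 2 ≤
      ∑ i : Fin hn, (res (w ω) (y ω) βs (k i)) ^ 2 :=
    le_trans hQle (le_trans hsInfle hQge)
  have hquad := quad_key (fun i j => w ω (k i) j) (fun i => y ω (k i)) βs βh hc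
  simp only [res] at hQQ
  have hd0 : ∀ i : Fin hn, ∑ j, w ω (k i) j * (βh j - βs j) = 0 := by
    have hsum0 : ∑ i : Fin hn, (∑ j, w ω (k i) j * (βh j - βs j)) ^ 2 = 0 := by
      have hle : ∑ i : Fin hn, (∑ j, w ω (k i) j * (βh j - βs j)) ^ 2 ≤ 0 := by
        linarith [hquad, hQQ]
      exact le_antisymm hle (Finset.sum_nonneg fun i _ => sq_nonneg _)
    intro i
    have := (Finset.sum_eq_zero_iff_of_nonneg (fun i _ => sq_nonneg _)).mp hsum0 i
      (Finset.mem_univ i)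
    exact pow_eq_zero_iff (two_ne_zero) |>.mp this
  have hβhs : βh = βs := by
    have hAu : ((Matrix.of (w ω)).submatrix
        (fun i : {x // x ∈ Finset.image k Finset.univ} => (i : Fin n)) id).mulVec
          (fun j => βh j - βs j) = 0 := by
      funext x
      obtain ⟨i, -, hi⟩ := Finset.mem_image.mp x.2
      simp only [Matrix.mulVec, dotProduct, Matrix.submatrix_apply, Matrix.of_apply, id]
      rw [← hi]
      simpa using hd0 i
    have hu := mulVec_eq_zero_of_rank _ ((hA1 ω).2 _ hcardim) hAu
    funext j
    have := congrFun hu j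
    simpa [sub_eq_zero] using this
  exact ⟨hdet, hβhs, fun β _ hfix => hfix.trans hβhs.symm⟩
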